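/- Let A ∈ ℍ[t] be a nonzero quaternion polynomial of degree at most 1. Then there exist a unit vector u ∈ ℝ³ and a constant c ∈ ℝ such that for all t ∈ ℝ, ⟨F(t), u⟩ = c·‖A(t)‖², where F(t) ∈ ℝ³ is the vector part of A(t)·i·star(A(t)). Since ‖F(t)‖ = ‖A(t)‖², the tangent field F(t) therefore forms a constant angle with the fixed direction u wherever A(t) ≠ 0; curves with such tangent fields are curves of constant slope (slant helices). -/

import Mathlib

open scoped RealInnerProductSpace

set_option maxHeartbeats 2000000

/-- The quaternion unit `i`. -/
def quatI : Quaternion ℝ := ⟨0, 1, 0, 0⟩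

/-- The vector part of a quaternion, identified with a vector of Euclidean 3-space. -/
noncomputable def quatVec (x : Quaternion ℝ) : EuclideanSpace ℝ (Fin 3) :=
  (WithLp.equiv 2 (Fin 3 → ℝ)).symm ![x.imI, x.imJ, x.imK]

private lemma inner_quatVec (x y : Quaternion ℝ) :
    (inner (𝕜 := ℝ) (quatVec x) (quatVec y) : ℝ) =
      x.imI * y.imI + x.imJ * y.imJ + x.imK * y.imK := by
  simp [quatVec, PiLp.inner_apply, Fin.sum_univ_three,
    RCLike.inner_apply, conj_trivial]
  ring

private lemma qnorm_sq (x : Quaternion ℝ) :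
    ‖x‖ ^ 2 = x.re ^ 2 + x.imI ^ 2 + x.imJ ^ 2 + x.imK ^ 2 := by
  rw [sq, ← Quaternion.normSq_eq_norm_mul_self, Quaternion.normSq_def']

private lemma sumsq_eq_zero {x y z : ℝ} (h : x ^ 2 + y ^ 2 + z ^ 2 = 0) :
    x = 0 ∧ y = 0 ∧ z = 0 :=
  ⟨by nlinarith, by nlinarith, by nlinarith⟩

private lemma quatI_re : quatI.re = 0 := rfl
private lemma quatI_imI : quatI.imI = 1 := rfl
private lemma quatI_imJ : quatI.imJ = 0 := rfl
private lemma quatI_imK : quatI.imK = 0 := rfl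

/-- For a nonzero quaternion polynomial `A` of degree at most one there are a
unit vector `u ∈ ℝ³` and a constant `c ∈ ℝ` with `⟨F(t), u⟩ = c·‖A(t)‖²` for all `t`, where
`F(t)` is the vector part of `A(t)·i·star A(t)`; since `‖F(t)‖ = ‖A(t)‖²`, the tangent field
`F` makes a constant angle with the fixed direction `u` (a curve of constant slope). -/
theorem slant_helix_of_linear_quaternion_polynomial (A : Polynomial (Quaternion ℝ))
    (hA : A ≠ 0) (hdeg : A.natDegree ≤ 1) :
    ∃ (u : EuclideanSpace ℝ (Fin 3)) (c : ℝ), ‖u‖ = 1 ∧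
      ∀ t : ℝ,
        (inner (𝕜 := ℝ) (quatVec (A.eval (t : Quaternion ℝ) * quatI * star (A.eval (t : Quaternion ℝ)))) u : ℝ) =
          c * ‖A.eval (t : Quaternion ℝ)‖ ^ 2 := by
  have hev : ∀ x : Quaternion ℝ, A.eval x = A.coeff 0 + A.coeff 1 * x := by
    intro x
    conv_lhs => rw [Polynomial.eq_X_add_C_of_natDegree_le_one hdeg]
    simp [add_comm, mul_comm]
  set a := A.coeff 0 with ha
  set b := A.coeff 1 with hb
  have hab : a ≠ 0 ∨ b ≠ 0 := by
    by_contra h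
    push_neg at h
    apply hA
    apply Polynomial.ext
    intro n
    rw [Polynomial.coeff_zero]
    match n with
    | 0 => exact ha ▸ h.1
    | 1 => exact hb ▸ h.2
    | (n + 2) =>
      exact Polynomial.coeff_eq_zero_of_natDegree_lt
        (lt_of_le_of_lt hdeg (by omega : 1 < n + 2))
  have build : ∀ (U : Quaternion ℝ) (c' : ℝ), quatVec U ≠ 0 →
      (∀ t : ℝ,
        (inner (𝕜 := ℝ) (quatVec (A.eval (t : Quaternion ℝ) * quatI * star (A.eval (t : Quaternion ℝ)))) (quatVec U) : ℝ)
          = c' * ‖A.eval (t : Quaternion ℝ)‖ ^ 2) →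
      ∃ (u : EuclideanSpace ℝ (Fin 3)) (c : ℝ), ‖u‖ = 1 ∧
      ∀ t : ℝ,
        (inner (𝕜 := ℝ) (quatVec (A.eval (t : Quaternion ℝ) * quatI * star (A.eval (t : Quaternion ℝ)))) u : ℝ) =
          c * ‖A.eval (t : Quaternion ℝ)‖ ^ 2 := by
    intro U c' hU h
    refine ⟨‖quatVec U‖⁻¹ • quatVec U, ‖quatVec U‖⁻¹ * c',
      norm_smul_inv_norm (𝕜 := ℝ) hU, fun t => ?_⟩
    rw [real_inner_smul_right, h t]
    ring
  have hUnz : ∀ U : Quaternion ℝ,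
      U.imI ^ 2 + U.imJ ^ 2 + U.imK ^ 2 ≠ 0 → quatVec U ≠ 0 := by
    intro U hne h0
    apply hne
    have h1 : (inner (𝕜 := ℝ) (quatVec U) (quatVec U) : ℝ) = 0 := by rw [h0]; simp
    rw [inner_quatVec] at h1
    nlinarith [h1]
  by_cases hb0 : b = 0
  · -- constant case
    have ha0 : a ≠ 0 := by
      rcases hab with h | h
      · exact h
      · exact absurd hb0 h
    have hna : Quaternion.normSq a ≠ 0 := by
      simpa [Quaternion.normSq_eq_zero] using ha0
    apply build (a * quatI * star a) (Quaternion.normSq a)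
    · apply hUnz
      have : (a * quatI * star a).imI ^ 2 + (a * quatI * star a).imJ ^ 2 +
          (a * quatI * star a).imK ^ 2 = (Quaternion.normSq a) ^ 2 := by
        simp only [Quaternion.normSq_def', Quaternion.re_mul, Quaternion.imI_mul,
          Quaternion.imJ_mul, Quaternion.imK_mul, Quaternion.re_star, Quaternion.imI_star,
          Quaternion.imJ_star, Quaternion.imK_star, quatI_re, quatI_imI, quatI_imJ, quatI_imK]
        ring
      rw [this]
      exact pow_ne_zero _ hna
    · intro t
      rw [hev, hb0]
      rw [inner_quatVec, qnorm_sq]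
      simp only [Quaternion.normSq_def', Quaternion.re_mul, Quaternion.imI_mul,
        Quaternion.imJ_mul, Quaternion.imK_mul, Quaternion.re_add, Quaternion.imI_add,
        Quaternion.imJ_add, Quaternion.imK_add, Quaternion.re_star, Quaternion.imI_star,
        Quaternion.imJ_star, Quaternion.imK_star, Quaternion.re_coe, Quaternion.imI_coe,
        Quaternion.imJ_coe, Quaternion.imK_coe, Quaternion.re_zero, Quaternion.imI_zero,
        Quaternion.imJ_zero, Quaternion.imK_zero, quatI_re, quatI_imI, quatI_imJ, quatI_imK]
      ring
  · set W : Quaternion ℝ := star b * a with hW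
    have hnb : Quaternion.normSq b ≠ 0 := by
      simpa [Quaternion.normSq_eq_zero] using hb0
    by_cases hw : W.imI = 0 ∧ W.imJ = 0 ∧ W.imK = 0
    · -- W has zero vector part : use b i b*
      apply build (b * quatI * star b) (Quaternion.normSq b)
      · apply hUnz
        have : (b * quatI * star b).imI ^ 2 + (b * quatI * star b).imJ ^ 2 +
            (b * quatI * star b).imK ^ 2 = (Quaternion.normSq b) ^ 2 := by
          simp only [Quaternion.normSq_def', Quaternion.re_mul, Quaternion.imI_mul,
            Quaternion.imJ_mul, Quaternion.imK_mul, Quaternion.re_star, Quaternion.imI_star,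
            Quaternion.imJ_star, Quaternion.imK_star, quatI_re, quatI_imI, quatI_imJ, quatI_imK]
          ring
        rw [this]
        exact pow_ne_zero _ hnb
      · intro t
        rw [hev]
        have key :
            (inner (𝕜 := ℝ) (quatVec ((a + b * (t : Quaternion ℝ)) * quatI * star (a + b * (t : Quaternion ℝ)))) (quatVec (b * quatI * star b)) : ℝ)
              = Quaternion.normSq b * ‖a + b * (t : Quaternion ℝ)‖ ^ 2
                - 2 * (W.imJ ^ 2 + W.imK ^ 2) := by
          rw [inner_quatVec, qnorm_sq, hW]
          simp only [Quaternion.normSq_def', Quaternion.re_mul, Quaternion.imI_mul,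
            Quaternion.imJ_mul, Quaternion.imK_mul, Quaternion.re_add, Quaternion.imI_add,
            Quaternion.imJ_add, Quaternion.imK_add, Quaternion.re_star, Quaternion.imI_star,
            Quaternion.imJ_star, Quaternion.imK_star, Quaternion.re_coe, Quaternion.imI_coe,
            Quaternion.imJ_coe, Quaternion.imK_coe, quatI_re, quatI_imI, quatI_imJ, quatI_imK]
          ring
        rw [key, hw.2.1, hw.2.2]
        ring
    · -- W has nonzero vector part : use b * vec W * b*
      set V : Quaternion ℝ := ⟨0, W.imI, W.imJ, W.imK⟩ with hV
      apply build (b * V * star b) (Quaternion.normSq b * W.imI)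
      · apply hUnz
        have hid : (b * V * star b).imI ^ 2 + (b * V * star b).imJ ^ 2 +
            (b * V * star b).imK ^ 2 =
            (Quaternion.normSq b) ^ 2 * (W.imI ^ 2 + W.imJ ^ 2 + W.imK ^ 2) := by
          simp only [Quaternion.normSq_def', Quaternion.re_mul, Quaternion.imI_mul,
            Quaternion.imJ_mul, Quaternion.imK_mul, Quaternion.re_star, Quaternion.imI_star,
            Quaternion.imJ_star, Quaternion.imK_star]
          simp only [hV]
          ring
        rw [hid]
        refine mul_ne_zero (pow_ne_zero _ hnb) ?_
        intro h0
        exact hw (sumsq_eq_zero h0)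
      · intro t
        rw [hev]
        rw [inner_quatVec, qnorm_sq]
        simp only [Quaternion.normSq_def', Quaternion.re_mul, Quaternion.imI_mul,
          Quaternion.imJ_mul, Quaternion.imK_mul, Quaternion.re_add, Quaternion.imI_add,
          Quaternion.imJ_add, Quaternion.imK_add, Quaternion.re_star, Quaternion.imI_star,
          Quaternion.imJ_star, Quaternion.imK_star, Quaternion.re_coe, Quaternion.imI_coe,
          Quaternion.imJ_coe, Quaternion.imK_coe, quatI_re, quatI_imI, quatI_imJ, quatI_imK]
        simp only [hV, hW, Quaternion.re_mul, Quaternion.imI_mul, Quaternion.imJ_mul,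
          Quaternion.imK_mul, Quaternion.re_star, Quaternion.imI_star, Quaternion.imJ_star,
          Quaternion.imK_star]
        ring
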